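/- Let n = (n₁,n₂,n₃) be a unit vector in ℝ³ such that the six real numbers n₂²−n₃²±g(n), n₃²−n₁²±g(n), n₁²−n₂²±g(n) are all nonzero, and suppose n₁n₂n₃ ≠ 0 and nᵢ² ≠ 1/3 for i = 1,2,3. Then the scalar triple product satisfies ⟨n, v₁(n) × v₂(n)⟩ = 1; in particular {n, v₁(n), v₂(n)} is a positively oriented orthonormal basis of ℝ³. -/

import Mathlib

noncomputable section

/-- Dot product on ℝ³ (standard inner product), vectors as triples. -/
def dot3 (x y : ℝ × ℝ × ℝ) : ℝ := x.1 * y.1 + x.2.1 * y.2.1 + x.2.2 * y.2.2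

/-- g(n) = √(1 − 4(n₁²n₂² + n₂²n₃² + n₃²n₁²) + 9n₁²n₂²n₃²). -/
def gfun (n₁ n₂ n₃ : ℝ) : ℝ :=
  Real.sqrt (1 - 4*(n₁^2*n₂^2 + n₂^2*n₃^2 + n₃^2*n₁^2) + 9*n₁^2*n₂^2*n₃^2)

/-- Normalizing factor ρ for the vector (n₁/(n₂²−n₃²+e), n₂/(n₃²−n₁²+e), n₃/(n₁²−n₂²+e)). -/
def rho (n₁ n₂ n₃ e : ℝ) : ℝ :=
  1 / Real.sqrt (n₁^2/(n₂^2-n₃^2+e)^2 + n₂^2/(n₃^2-n₁^2+e)^2 + n₃^2/(n₁^2-n₂^2+e)^2)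

/-- The unit vector in the direction (n₁/(n₂²−n₃²+e), n₂/(n₃²−n₁²+e), n₃/(n₁²−n₂²+e)). -/
def uvec (n₁ n₂ n₃ e : ℝ) : ℝ × ℝ × ℝ :=
  (rho n₁ n₂ n₃ e * (n₁ / (n₂^2 - n₃^2 + e)),
   rho n₁ n₂ n₃ e * (n₂ / (n₃^2 - n₁^2 + e)),
   rho n₁ n₂ n₃ e * (n₃ / (n₁^2 - n₂^2 + e)))

/-- u₊(n): the + sign throughout. -/
def uplus (n₁ n₂ n₃ : ℝ) : ℝ × ℝ × ℝ := uvec n₁ n₂ n₃ (gfun n₁ n₂ n₃)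

/-- u₋(n): the − sign throughout. -/
def uminus (n₁ n₂ n₃ : ℝ) : ℝ × ℝ × ℝ := uvec n₁ n₂ n₃ (-(gfun n₁ n₂ n₃))

def smul3 (t : ℝ) (x : ℝ × ℝ × ℝ) : ℝ × ℝ × ℝ := (t * x.1, t * x.2.1, t * x.2.2)
def add3 (x y : ℝ × ℝ × ℝ) : ℝ × ℝ × ℝ := (x.1 + y.1, x.2.1 + y.2.1, x.2.2 + y.2.2)
def sub3 (x y : ℝ × ℝ × ℝ) : ℝ × ℝ × ℝ := (x.1 - y.1, x.2.1 - y.2.1, x.2.2 - y.2.2)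

/-- s(n) = sign(n₁n₂n₃(n₁²−1/3)(n₂²−1/3)(n₃²−1/3)). -/
def sfun (n₁ n₂ n₃ : ℝ) : ℝ :=
  Real.sign (n₁*n₂*n₃*(n₁^2 - 1/3)*(n₂^2 - 1/3)*(n₃^2 - 1/3))

/-- v₁(n) = (u₋(n) − s(n)·u₊(n))/√2. -/
def v1 (n₁ n₂ n₃ : ℝ) : ℝ × ℝ × ℝ :=
  smul3 (1 / Real.sqrt 2) (sub3 (uminus n₁ n₂ n₃) (smul3 (sfun n₁ n₂ n₃) (uplus n₁ n₂ n₃)))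

/-- v₂(n) = (u₋(n) + s(n)·u₊(n))/√2. -/
def v2 (n₁ n₂ n₃ : ℝ) : ℝ × ℝ × ℝ :=
  smul3 (1 / Real.sqrt 2) (add3 (uminus n₁ n₂ n₃) (smul3 (sfun n₁ n₂ n₃) (uplus n₁ n₂ n₃)))

/-- Cross product on ℝ³, vectors as triples. -/
def cross3 (x y : ℝ × ℝ × ℝ) : ℝ × ℝ × ℝ :=
  (x.2.1 * y.2.2 - x.2.2 * y.2.1,
   x.2.2 * y.1 - x.1 * y.2.2,
   x.1 * y.2.1 - x.2.1 * y.1)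

/-- ⟨n, v₁(n) × v₂(n)⟩ = 1, and {n, v₁(n), v₂(n)} is a positively oriented
orthonormal basis of ℝ³. -/


private lemma sqpos {x : ℝ} (hx : x ≠ 0) : 0 < x^2 := by
  rcases hx.lt_or_gt with h|h <;> nlinarith

private lemma pow4pos {x : ℝ} (hx : x ≠ 0) : 0 < x^4 := by
  nlinarith [mul_pos (sqpos hx) (sqpos hx)]

private lemma schur_aux (a b c : ℝ) (ha : 0 < a) (hc : 0 < c) (hba : b ≤ a) (hcb : c ≤ b)
    (hne : ¬(a = b ∧ b = c)) :
    0 < a*(a-b)*(a-c) + b*(b-a)*(b-c) + c*(c-a)*(c-b) := by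
  by_cases hab : a = b
  · have hbc : c < b := lt_of_le_of_ne hcb (fun h => hne ⟨hab, h.symm⟩)
    subst hab
    nlinarith [mul_pos hc (mul_pos (sub_pos.mpr hbc) (sub_pos.mpr hbc))]
  · have hab' : b < a := lt_of_le_of_ne hba (fun h => hab h.symm)
    nlinarith [mul_pos ha (mul_pos (sub_pos.mpr hab') (sub_pos.mpr hab')),
      mul_nonneg (sub_nonneg.mpr hcb) (sq_nonneg (a-b)),
      mul_nonneg (mul_nonneg hc.le (sub_nonneg.mpr (hcb.trans hba))) (sub_nonneg.mpr hcb)]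

private lemma dot3_comm (x y : ℝ × ℝ × ℝ) : dot3 x y = dot3 y x := by
  simp only [dot3]; ring

private lemma dot3_vsub (x p q : ℝ × ℝ × ℝ) (t s : ℝ) :
    dot3 x (smul3 t (sub3 p (smul3 s q))) = t*(dot3 x p - s*(dot3 x q)) := by
  simp only [dot3, smul3, sub3]; ring

private lemma dot3_vadd (x p q : ℝ × ℝ × ℝ) (t s : ℝ) :
    dot3 x (smul3 t (add3 p (smul3 s q))) = t*(dot3 x p + s*(dot3 x q)) := by
  simp only [dot3, smul3, add3]; ring

private lemma dot3_v11 (p q : ℝ × ℝ × ℝ) (t s : ℝ) :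
    dot3 (smul3 t (sub3 p (smul3 s q))) (smul3 t (sub3 p (smul3 s q)))
      = t^2*(dot3 p p - 2*s*(dot3 p q) + s^2*(dot3 q q)) := by
  simp only [dot3, smul3, sub3]; ring

private lemma dot3_v22 (p q : ℝ × ℝ × ℝ) (t s : ℝ) :
    dot3 (smul3 t (add3 p (smul3 s q))) (smul3 t (add3 p (smul3 s q)))
      = t^2*(dot3 p p + 2*s*(dot3 p q) + s^2*(dot3 q q)) := by
  simp only [dot3, smul3, add3]; ring

private lemma dot3_v12 (p q : ℝ × ℝ × ℝ) (t s : ℝ) :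
    dot3 (smul3 t (sub3 p (smul3 s q))) (smul3 t (add3 p (smul3 s q)))
      = t^2*(dot3 p p - s^2*(dot3 q q)) := by
  simp only [dot3, smul3, sub3, add3]; ring

private lemma triple_v (x p q : ℝ × ℝ × ℝ) (t s : ℝ) :
    dot3 x (cross3 (smul3 t (sub3 p (smul3 s q))) (smul3 t (add3 p (smul3 s q))))
      = t^2*(2*s)*(dot3 x (cross3 p q)) := by
  simp only [dot3, cross3, smul3, sub3, add3]; ring

private lemma gram (x p q : ℝ × ℝ × ℝ) :
    (dot3 x (cross3 p q))^2
      = dot3 x x * dot3 p p * dot3 q q + 2*(dot3 x p)*(dot3 p q)*(dot3 x q)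
        - dot3 x x*(dot3 p q)^2 - dot3 p p*(dot3 x q)^2 - dot3 q q*(dot3 x p)^2 := by
  simp only [dot3, cross3]; ring

private lemma Spos (n₁ n₂ n₃ e : ℝ) (hn1 : n₁ ≠ 0) (hX : n₂^2 - n₃^2 + e ≠ 0) :
    0 < n₁^2/(n₂^2-n₃^2+e)^2 + n₂^2/(n₃^2-n₁^2+e)^2 + n₃^2/(n₁^2-n₂^2+e)^2 := by
  have h1 : 0 < n₁^2/(n₂^2-n₃^2+e)^2 := div_pos (sqpos hn1) (sqpos hX)
  have h2 : (0:ℝ) ≤ n₂^2/(n₃^2-n₁^2+e)^2 := by positivity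
  have h3 : (0:ℝ) ≤ n₃^2/(n₁^2-n₂^2+e)^2 := by positivity
  linarith

private lemma rho_pos (n₁ n₂ n₃ e : ℝ) (hn1 : n₁ ≠ 0) (hX : n₂^2 - n₃^2 + e ≠ 0) :
    0 < rho n₁ n₂ n₃ e :=
  one_div_pos.mpr (Real.sqrt_pos.mpr (Spos n₁ n₂ n₃ e hn1 hX))

private lemma uvec_norm (n₁ n₂ n₃ e : ℝ) (hn1 : n₁ ≠ 0) (hX : n₂^2 - n₃^2 + e ≠ 0) :
    dot3 (uvec n₁ n₂ n₃ e) (uvec n₁ n₂ n₃ e) = 1 := by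
  have hS := Spos n₁ n₂ n₃ e hn1 hX
  have hrho : rho n₁ n₂ n₃ e ^ 2
      = 1 / (n₁^2/(n₂^2-n₃^2+e)^2 + n₂^2/(n₃^2-n₁^2+e)^2 + n₃^2/(n₁^2-n₂^2+e)^2) := by
    simp only [rho, div_pow, one_pow, Real.sq_sqrt hS.le]
  calc dot3 (uvec n₁ n₂ n₃ e) (uvec n₁ n₂ n₃ e)
      = rho n₁ n₂ n₃ e ^2 * ((n₁/(n₂^2-n₃^2+e))^2 + (n₂/(n₃^2-n₁^2+e))^2 + (n₃/(n₁^2-n₂^2+e))^2) := by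
        simp only [uvec, dot3]; ring
    _ = 1 := by
        rw [div_pow, div_pow, div_pow, hrho, one_div, inv_mul_cancel₀ hS.ne']

private lemma n_orth (n₁ n₂ n₃ e : ℝ) (hunit : n₁^2 + n₂^2 + n₃^2 = 1)
    (he2 : e^2 = 1 - 4*(n₁^2*n₂^2 + n₂^2*n₃^2 + n₃^2*n₁^2) + 9*n₁^2*n₂^2*n₃^2)
    (hX : n₂^2 - n₃^2 + e ≠ 0) (hY : n₃^2 - n₁^2 + e ≠ 0) (hZ : n₁^2 - n₂^2 + e ≠ 0) :
    dot3 (n₁, n₂, n₃) (uvec n₁ n₂ n₃ e) = 0 := by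
  have hsum : n₁^2/(n₂^2-n₃^2+e) + n₂^2/(n₃^2-n₁^2+e) + n₃^2/(n₁^2-n₂^2+e) = 0 := by
    rw [div_add_div _ _ hX hY, div_add_div _ _ (mul_ne_zero hX hY) hZ, div_eq_zero_iff]
    left
    linear_combination (n₃^2 + n₂^2 + n₁^2) * he2 + ((-1)*n₃^2 + (-1)*n₃^4 + (-1)*n₂^2 + (-2)*n₂^2*n₃^2 + (-1)*n₂^4 + (-1)*n₁^2 + (-2)*n₁^2*n₃^2 + (-2)*n₁^2*n₂^2 + 9*n₁^2*n₂^2*n₃^2 + (-1)*n₁^4) * hunit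
  calc dot3 (n₁, n₂, n₃) (uvec n₁ n₂ n₃ e)
      = rho n₁ n₂ n₃ e * (n₁^2/(n₂^2-n₃^2+e) + n₂^2/(n₃^2-n₁^2+e) + n₃^2/(n₁^2-n₂^2+e)) := by
        simp only [uvec, dot3]; ring
    _ = 0 := by rw [hsum, mul_zero]

private lemma u_orth (n₁ n₂ n₃ e : ℝ) (hunit : n₁^2 + n₂^2 + n₃^2 = 1)
    (he2 : e^2 = 1 - 4*(n₁^2*n₂^2 + n₂^2*n₃^2 + n₃^2*n₁^2) + 9*n₁^2*n₂^2*n₃^2)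
    (hXm : n₂^2 - n₃^2 + -e ≠ 0) (hX : n₂^2 - n₃^2 + e ≠ 0)
    (hYm : n₃^2 - n₁^2 + -e ≠ 0) (hY : n₃^2 - n₁^2 + e ≠ 0)
    (hZm : n₁^2 - n₂^2 + -e ≠ 0) (hZ : n₁^2 - n₂^2 + e ≠ 0) :
    dot3 (uvec n₁ n₂ n₃ (-e)) (uvec n₁ n₂ n₃ e) = 0 := by
  have hsum : n₁^2/((n₂^2-n₃^2+-e)*(n₂^2-n₃^2+e)) + n₂^2/((n₃^2-n₁^2+-e)*(n₃^2-n₁^2+e))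
      + n₃^2/((n₁^2-n₂^2+-e)*(n₁^2-n₂^2+e)) = 0 := by
    rw [div_add_div _ _ (mul_ne_zero hXm hX) (mul_ne_zero hYm hY),
        div_add_div _ _ (mul_ne_zero (mul_ne_zero hXm hX) (mul_ne_zero hYm hY)) (mul_ne_zero hZm hZ),
        div_eq_zero_iff]
    left
    linear_combination (n₃^2 + n₃^2*e^2 + (-2)*n₃^6 + n₂^2 + n₂^2*e^2 + (-3)*n₂^2*n₃^4 + (-3)*n₂^4*n₃^2 + (-2)*n₂^6 + n₁^2 + n₁^2*e^2 + (-3)*n₁^2*n₃^4 + (-12)*n₁^2*n₂^2*n₃^2 + 9*n₁^2*n₂^2*n₃^4 + (-3)*n₁^2*n₂^4 + 9*n₁^2*n₂^4*n₃^2 + (-3)*n₁^4*n₃^2 + (-3)*n₁^4*n₂^2 + 9*n₁^4*n₂^2*n₃^2 + (-2)*n₁^6) * he2 + ((-1)*n₃^2 + (-1)*n₃^4 + n₃^6 + n₃^8 + (-1)*n₂^2 + (-2)*n₂^2*n₃^2 + 4*n₂^2*n₃^4 + 5*n₂^2*n₃^6 + (-1)*n₂^4 + 4*n₂^4*n₃^2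 + 8*n₂^4*n₃^4 + n₂^6 + 5*n₂^6*n₃^2 + n₂^8 + (-1)*n₁^2 + (-2)*n₁^2*n₃^2 + 4*n₁^2*n₃^4 + 5*n₁^2*n₃^6 + (-2)*n₁^2*n₂^2 + 18*n₁^2*n₂^2*n₃^2 + 8*n₁^2*n₂^2*n₃^4 + (-18)*n₁^2*n₂^2*n₃^6 + 4*n₁^2*n₂^4 + 8*n₁^2*n₂^4*n₃^2 + (-45)*n₁^2*n₂^4*n₃^4 + 5*n₁^2*n₂^6 + (-18)*n₁^2*n₂^6*n₃^2 + (-1)*n₁^4 + 4*n₁^4*n₃^2 + 8*n₁^4*n₃^4 + 4*n₁^4*n₂^2 + 8*n₁^4*n₂^2*n₃^2 + (-45)*n₁^4*n₂^2*n₃^4 + 8*n₁^4*n₂^4 + (-45)*n₁^4*n₂^4*n₃^2 + 81*n₁^4*n₂^4*n₃^4 + n₁^6 + 5*n₁^6*n₃^2 + 5*n₁^6*n₂^2 + (-18)*n₁^6*n₂^2*n₃^2 + n₁^8) * hunit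
  calc dot3 (uvec n₁ n₂ n₃ (-e)) (uvec n₁ n₂ n₃ e)
      = (rho n₁ n₂ n₃ (-e) * rho n₁ n₂ n₃ e) *
        (n₁^2/(n₂^2-n₃^2+-e)/(n₂^2-n₃^2+e) + n₂^2/(n₃^2-n₁^2+-e)/(n₃^2-n₁^2+e)
          + n₃^2/(n₁^2-n₂^2+-e)/(n₁^2-n₂^2+e)) := by
        simp only [uvec, dot3]; ring
    _ = 0 := by rw [div_div, div_div, div_div, hsum, mul_zero]

private lemma hfact_gen (n₁ n₂ n₃ r1 r2 A B C D E F : ℝ) :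
    dot3 (n₁,n₂,n₃) (cross3 (r1*(n₁/A), r1*(n₂/B), r1*(n₃/C)) (r2*(n₁/D), r2*(n₂/E), r2*(n₃/F)))
      = (r1*r2) * (n₁*((n₂/B)*(n₃/F) - (n₃/C)*(n₂/E)) + n₂*((n₃/C)*(n₁/D) - (n₁/A)*(n₃/F))
          + n₃*((n₁/A)*(n₂/E) - (n₂/B)*(n₁/D))) := by
  simp only [dot3, cross3]; ring

private lemma deltaD_gen (n₁ n₂ n₃ A B C D E F : ℝ) (hA : A ≠ 0) (hB : B ≠ 0) (hC : C ≠ 0)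
    (hD : D ≠ 0) (hE : E ≠ 0) (hF : F ≠ 0) :
    (n₁*((n₂/B)*(n₃/F) - (n₃/C)*(n₂/E)) + n₂*((n₃/C)*(n₁/D) - (n₁/A)*(n₃/F))
        + n₃*((n₁/A)*(n₂/E) - (n₂/B)*(n₁/D))) * (A*B*C*D*E*F)
      = n₁*n₂*n₃*(A*C*D*E - A*B*D*F + A*B*E*F - B*C*D*E + B*C*D*F - A*C*E*F) := by
  field_simp
  ring

private lemma big_assemble (Δ D N w R KK m g : ℝ) (hN : Δ*D = N) (hN2 : N = -2*g*m*KK)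
    (hD : D = m^2*R) (hwR : w*R = -(1/27)*m*KK^3) :
    Δ*w*D^2 = (2/27)*g*m^4*KK^4 := by
  calc Δ*w*D^2 = (Δ*D)*(w*D) := by ring
    _ = N*(w*(m^2*R)) := by rw [hN, hD]
    _ = (-2*g*m*KK)*(m^2*(w*R)) := by rw [hN2]; ring
    _ = (-2*g*m*KK)*(m^2*(-(1/27)*m*KK^3)) := by rw [hwR]
    _ = (2/27)*g*m^4*KK^4 := by ring

private lemma pos_assemble (T0 Δ w D P r1 r2 : ℝ) (hT0 : T0 = (r1*r2)*Δ)
    (hbig : Δ * w * D^2 = P) (hP : 0 < P) (hDne : D ≠ 0) (hr1 : 0 < r1) (hr2 : 0 < r2) :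
    0 < T0 * w := by
  have hD2 : 0 < D^2 := sqpos hDne
  have h0 : 0 < (Δ*w)*D^2 := by rw [show (Δ*w)*D^2 = Δ*w*D^2 from by ring, hbig]; exact hP
  have hDw : 0 < Δ*w := by
    rcases mul_pos_iff.mp h0 with ⟨h,_⟩|⟨_,h⟩
    · exact h
    · exact absurd hD2 (by linarith)
  rw [hT0]
  exact lt_of_lt_of_eq (mul_pos (mul_pos hr1 hr2) hDw) (by ring)

set_option maxHeartbeats 1000000 in
private lemma triple_pos (n₁ n₂ n₃ g : ℝ) (hunit : n₁^2 + n₂^2 + n₃^2 = 1)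
    (hg2 : g^2 = 1 - 4*(n₁^2*n₂^2 + n₂^2*n₃^2 + n₃^2*n₁^2) + 9*n₁^2*n₂^2*n₃^2) (hgpos : 0 < g)
    (hn1 : n₁ ≠ 0) (hn2 : n₂ ≠ 0) (hn3 : n₃ ≠ 0)
    (ht1 : n₁^2 ≠ 1/3) (ht2 : n₂^2 ≠ 1/3) (ht3 : n₃^2 ≠ 1/3)
    (hXm : n₂^2 - n₃^2 + -g ≠ 0) (hXp : n₂^2 - n₃^2 + g ≠ 0)
    (hYm : n₃^2 - n₁^2 + -g ≠ 0) (hYp : n₃^2 - n₁^2 + g ≠ 0)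
    (hZm : n₁^2 - n₂^2 + -g ≠ 0) (hZp : n₁^2 - n₂^2 + g ≠ 0) :
    0 < dot3 (n₁, n₂, n₃) (cross3 (uvec n₁ n₂ n₃ (-g)) (uvec n₁ n₂ n₃ g))
        * (n₁*n₂*n₃*(n₁^2 - 1/3)*(n₂^2 - 1/3)*(n₃^2 - 1/3)) := by
  set Xm := n₂^2 - n₃^2 + -g with hdXm
  set Xp := n₂^2 - n₃^2 + g with hdXp
  set Ym := n₃^2 - n₁^2 + -g with hdYm
  set Yp := n₃^2 - n₁^2 + g with hdYp
  set Zm := n₁^2 - n₂^2 + -g with hdZm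
  set Zp := n₁^2 - n₂^2 + g with hdZp
  set w := n₁*n₂*n₃*(n₁^2 - 1/3)*(n₂^2 - 1/3)*(n₃^2 - 1/3) with hdw
  set K := ((1-3*n₁^2)*(2-3*n₁^2-9*n₂^2*n₃^2)) with hdK
  set R := ((2-3*n₁^2-9*n₂^2*n₃^2)*(2-3*n₂^2-9*n₃^2*n₁^2)*(2-3*n₃^2-9*n₁^2*n₂^2)) with hdR
  set Del := n₁*((n₂/Ym)*(n₃/Zp) - (n₃/Zm)*(n₂/Yp)) + n₂*((n₃/Zm)*(n₁/Xp) - (n₁/Xm)*(n₃/Zp))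
      + n₃*((n₁/Xm)*(n₂/Yp) - (n₂/Ym)*(n₁/Xp)) with hdDel
  set D := Xm*Ym*Zm*Xp*Yp*Zp with hdD
  set N := n₁*n₂*n₃*(Xm*Zm*Xp*Yp - Xm*Ym*Xp*Zp + Xm*Ym*Yp*Zp - Ym*Zm*Xp*Yp + Ym*Zm*Xp*Zp
      - Xm*Zm*Yp*Zp) with hdN
  have hT0 : dot3 (n₁, n₂, n₃) (cross3 (uvec n₁ n₂ n₃ (-g)) (uvec n₁ n₂ n₃ g))
      = (rho n₁ n₂ n₃ (-g) * rho n₁ n₂ n₃ g) * Del := by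
    rw [hdDel, hdXm, hdXp, hdYm, hdYp, hdZm, hdZp]
    simp only [uvec]
    exact hfact_gen n₁ n₂ n₃ (rho n₁ n₂ n₃ (-g)) (rho n₁ n₂ n₃ g)
      (n₂^2-n₃^2+-g) (n₃^2-n₁^2+-g) (n₁^2-n₂^2+-g) (n₂^2-n₃^2+g) (n₃^2-n₁^2+g) (n₁^2-n₂^2+g)
  have hN : Del * D = N := by
    rw [hdDel, hdD, hdN]
    exact deltaD_gen n₁ n₂ n₃ Xm Ym Zm Xp Yp Zp hXm hYm hZm hXp hYp hZp
  have hN2 : N = -2*g*(n₁*n₂*n₃)*K := by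
    rw [hdN, hdK, hdXm, hdXp, hdYm, hdYp, hdZm, hdZp]
    linear_combination ((-4)*n₁*n₂*n₃*g + (-4)*n₁*n₂*n₃^3*g + (-4)*n₁*n₂*n₃^5*g + (-4)*n₁*n₂^3*n₃*g + 10*n₁*n₂^3*n₃^3*g + (-4)*n₁*n₂^5*n₃*g + 14*n₁^3*n₂*n₃*g + 10*n₁^3*n₂*n₃^3*g + 10*n₁^3*n₂^3*n₃*g + (-4)*n₁^5*n₂*n₃*g) * hunit
  have hD2 : D = (n₁*n₂*n₃)^2*R := by
    rw [hdD, hdR, hdXm, hdXp, hdYm, hdYp, hdZm, hdZp]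
    linear_combination ((-1) + (-1)*g^2 + (-1)*g^4 + 2*n₃^4 + 2*n₃^4*g^2 + (-1)*n₃^8 + 6*n₂^2*n₃^2 + 2*n₂^2*n₃^2*g^2 + (-6)*n₂^2*n₃^6 + 2*n₂^4 + 2*n₂^4*g^2 + (-11)*n₂^4*n₃^4 + (-6)*n₂^6*n₃^2 + (-1)*n₂^8 + 6*n₁^2*n₃^2 + 2*n₁^2*n₃^2*g^2 + (-6)*n₁^2*n₃^6 + 6*n₁^2*n₂^2 + 2*n₁^2*n₂^2*g^2 + (-18)*n₁^2*n₂^2*n₃^2 + (-9)*n₁^2*n₂^2*n₃^2*g^2 + (-24)*n₁^2*n₂^2*n₃^4 + 18*n₁^2*n₂^2*n₃^6 + (-24)*n₁^2*n₂^4*n₃^2 + 54*n₁^2*n₂^4*n₃^4 + (-6)*n₁^2*n₂^6 + 18*n₁^2*n₂^6*n₃^2 + 2*n₁^4 + 2*n₁^4*g^2 + (-11)*n₁^4*n₃^4 + (-24)*n₁^4*n₂^2*n₃^2 + 54*n₁^4*n₂^2*n₃^4 + (-11)*n₁^4*n₂^4 + 54*n₁^4*n₂^4*n₃^2 + (-81)*n₁^4*n₂^4*n₃^4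 + (-6)*n₁^6*n₃^2 + (-6)*n₁^6*n₂^2 + 18*n₁^6*n₂^2*n₃^2 + (-1)*n₁^8) * hg2 + (1 + n₃^2 + (-1)*n₃^4 + (-1)*n₃^6 + n₂^2 + (-8)*n₂^2*n₃^2 + (-9)*n₂^2*n₃^4 + 4*n₂^2*n₃^6 + 4*n₂^2*n₃^8 + (-1)*n₂^4 + (-9)*n₂^4*n₃^2 + 17*n₂^4*n₃^4 + 21*n₂^4*n₃^6 + (-1)*n₂^6 + 4*n₂^6*n₃^2 + 21*n₂^6*n₃^4 + 4*n₂^8*n₃^2 + n₁^2 + (-8)*n₁^2*n₃^2 + (-9)*n₁^2*n₃^4 + 4*n₁^2*n₃^6 + 4*n₁^2*n₃^8 + (-8)*n₁^2*n₂^2 + 11*n₁^2*n₂^2*n₃^2 + 61*n₁^2*n₂^2*n₃^4 + 33*n₁^2*n₂^2*n₃^6 + (-9)*n₁^2*n₂^2*n₃^8 + (-9)*n₁^2*n₂^4 + 61*n₁^2*n₂^4*n₃^2 + (-59)*n₁^2*n₂^4*n₃^4 + (-117)*n₁^2*n₂^4*n₃^6 + 4*n₁^2*n₂^6 + 33*n₁^2*n₂^6*n₃^2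 + (-117)*n₁^2*n₂^6*n₃^4 + 4*n₁^2*n₂^8 + (-9)*n₁^2*n₂^8*n₃^2 + (-1)*n₁^4 + (-9)*n₁^4*n₃^2 + 17*n₁^4*n₃^4 + 21*n₁^4*n₃^6 + (-9)*n₁^4*n₂^2 + 61*n₁^4*n₂^2*n₃^2 + (-59)*n₁^4*n₂^2*n₃^4 + (-117)*n₁^4*n₂^2*n₃^6 + 17*n₁^4*n₂^4 + (-59)*n₁^4*n₂^4*n₃^2 + (-243)*n₁^4*n₂^4*n₃^4 + 405*n₁^4*n₂^4*n₃^6 + 21*n₁^4*n₂^6 + (-117)*n₁^4*n₂^6*n₃^2 + 405*n₁^4*n₂^6*n₃^4 + (-1)*n₁^6 + 4*n₁^6*n₃^2 + 21*n₁^6*n₃^4 + 4*n₁^6*n₂^2 + 33*n₁^6*n₂^2*n₃^2 + (-117)*n₁^6*n₂^2*n₃^4 + 21*n₁^6*n₂^4 + (-117)*n₁^6*n₂^4*n₃^2 + 405*n₁^6*n₂^4*n₃^4 + 4*n₁^8*n₃^2 + 4*n₁^8*n₂^2 + (-9)*n₁^8*n₂^2*n₃^2) * hunit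
  have hwR : w*R = -(1/27)*(n₁*n₂*n₃)*K^3 := by
    rw [hdw, hdR, hdK]
    linear_combination ((-4/3)*n₁*n₂*n₃^3 + (-4/3)*n₁*n₂^3*n₃ + 6*n₁*n₂^3*n₃^3 + 6*n₁*n₂^3*n₃^5 + 6*n₁*n₂^5*n₃^3 + (-27)*n₁*n₂^5*n₃^5 + 8/3*n₁^3*n₂*n₃ + 6*n₁^3*n₂*n₃^3 + 6*n₁^3*n₂*n₃^5 + 6*n₁^3*n₂^3*n₃ + (-45)*n₁^3*n₂^3*n₃^3 + (-36)*n₁^3*n₂^3*n₃^5 + (-27)*n₁^3*n₂^3*n₃^7 + 6*n₁^3*n₂^5*n₃ + (-36)*n₁^3*n₂^5*n₃^3 + 108*n₁^3*n₂^5*n₃^5 + 81*n₁^3*n₂^5*n₃^7 + (-27)*n₁^3*n₂^7*n₃^3 + 81*n₁^3*n₂^7*n₃^5 + (-18)*n₁^5*n₂*n₃ + (-12)*n₁^5*n₂*n₃^3 + (-27)*n₁^5*n₂*n₃^5 + (-12)*n₁^5*n₂^3*n₃ + 153*n₁^5*n₂^3*n₃^3 + 108*n₁^5*n₂^3*n₃^5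 + 81*n₁^5*n₂^3*n₃^7 + (-27)*n₁^5*n₂^5*n₃ + 108*n₁^5*n₂^5*n₃^3 + (-243)*n₁^5*n₂^5*n₃^5 + (-243)*n₁^5*n₂^5*n₃^7 + 81*n₁^5*n₂^7*n₃^3 + (-243)*n₁^5*n₂^7*n₃^5 + 45*n₁^7*n₂*n₃ + 27*n₁^7*n₂*n₃^3 + 27*n₁^7*n₂*n₃^5 + 27*n₁^7*n₂^3*n₃ + (-297)*n₁^7*n₂^3*n₃^3 + (-162)*n₁^7*n₂^3*n₃^5 + 27*n₁^7*n₂^5*n₃ + (-162)*n₁^7*n₂^5*n₃^3 + 486*n₁^7*n₂^5*n₃^5 + (-54)*n₁^9*n₂*n₃ + (-27)*n₁^9*n₂*n₃^3 + (-27)*n₁^9*n₂^3*n₃ + 243*n₁^9*n₂^3*n₃^3 + 27*n₁^11*n₂*n₃) * hunit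
  have h3a : (1:ℝ) - 3*n₁^2 ≠ 0 := fun h => ht1 (by linarith)
  have hR1 : n₁^2*(2-3*n₁^2-9*n₂^2*n₃^2) = Xp*Xm := by
    rw [hdXp, hdXm]
    linear_combination (1) * hg2 + ((-1) + (-1)*n₃^2 + (-1)*n₂^2 + (-3)*n₁^2) * hunit
  have hR1ne : (2-3*n₁^2-9*n₂^2*n₃^2) ≠ 0 := by
    intro h
    exact mul_ne_zero hXp hXm (by rw [← hR1, h, mul_zero])
  have hKne : K ≠ 0 := by rw [hdK]; exact mul_ne_zero h3a hR1ne
  have hDne : D ≠ 0 := by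
    rw [hdD]
    exact mul_ne_zero (mul_ne_zero (mul_ne_zero (mul_ne_zero (mul_ne_zero hXm hYm) hZm) hXp) hYp) hZp
  have hbig := big_assemble Del D N w R K (n₁*n₂*n₃) g hN hN2 hD2 hwR
  have hpos : 0 < (2/27)*g*(n₁*n₂*n₃)^4*K^4 := by
    have hA := pow4pos (mul_ne_zero (mul_ne_zero hn1 hn2) hn3)
    have hB := pow4pos hKne
    exact mul_pos (mul_pos (mul_pos (by norm_num : (0:ℝ) < 2/27) hgpos) hA) hB
  exact pos_assemble _ Del w D ((2/27)*g*(n₁*n₂*n₃)^4*K^4)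
    (rho n₁ n₂ n₃ (-g)) (rho n₁ n₂ n₃ g) hT0 hbig hpos hDne
    (rho_pos n₁ n₂ n₃ (-g) hn1 hXm) (rho_pos n₁ n₂ n₃ g hn1 hXp)

theorem stmt2 (n₁ n₂ n₃ : ℝ) (hunit : n₁^2 + n₂^2 + n₃^2 = 1)
    (h1 : n₂^2 - n₃^2 + gfun n₁ n₂ n₃ ≠ 0)
    (h2 : n₃^2 - n₁^2 + gfun n₁ n₂ n₃ ≠ 0)
    (h3 : n₁^2 - n₂^2 + gfun n₁ n₂ n₃ ≠ 0)
    (h4 : n₂^2 - n₃^2 - gfun n₁ n₂ n₃ ≠ 0)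
    (h5 : n₃^2 - n₁^2 - gfun n₁ n₂ n₃ ≠ 0)
    (h6 : n₁^2 - n₂^2 - gfun n₁ n₂ n₃ ≠ 0)
    (hprod : n₁ * n₂ * n₃ ≠ 0)
    (ht1 : n₁^2 ≠ 1/3) (ht2 : n₂^2 ≠ 1/3) (ht3 : n₃^2 ≠ 1/3) :
    dot3 (n₁, n₂, n₃) (cross3 (v1 n₁ n₂ n₃) (v2 n₁ n₂ n₃)) = 1 ∧
    dot3 (n₁, n₂, n₃) (v1 n₁ n₂ n₃) = 0 ∧
    dot3 (n₁, n₂, n₃) (v2 n₁ n₂ n₃) = 0 ∧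
    dot3 (v1 n₁ n₂ n₃) (v2 n₁ n₂ n₃) = 0 ∧
    dot3 (v1 n₁ n₂ n₃) (v1 n₁ n₂ n₃) = 1 ∧
    dot3 (v2 n₁ n₂ n₃) (v2 n₁ n₂ n₃) = 1 := by
  have hn1 : n₁ ≠ 0 := fun h => hprod (by rw [h, zero_mul, zero_mul])
  have hn2 : n₂ ≠ 0 := fun h => hprod (by rw [h, mul_zero, zero_mul])
  have hn3 : n₃ ≠ 0 := fun h => hprod (by rw [h, mul_zero])
  have hsq1 : 0 < n₁^2 := sqpos hn1
  have hsq2 : 0 < n₂^2 := sqpos hn2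
  have hsq3 : 0 < n₃^2 := sqpos hn3
  have hGpos : 0 < 1 - 4*(n₁^2*n₂^2 + n₂^2*n₃^2 + n₃^2*n₁^2) + 9*n₁^2*n₂^2*n₃^2 := by
    rcases le_total (n₁^2) (n₂^2) with h12|h12 <;> rcases le_total (n₂^2) (n₃^2) with h23|h23 <;>
      rcases le_total (n₁^2) (n₃^2) with h13|h13
    · exact lt_of_lt_of_eq (schur_aux (n₃^2) (n₂^2) (n₁^2) hsq3 hsq1 h23 h12
        (fun h => ht1 (by obtain ⟨u,v⟩ := h; linarith))) (by linear_combination (1 + n₃^2 + n₃^4 + n₂^2 + (-2)*n₂^2*n₃^2 + n₂^4 + n₁^2 + (-2)*n₁^2*n₃^2 + (-2)*n₁^2*n₂^2 + n₁^4) * hunit)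
    · exact lt_of_lt_of_eq (schur_aux (n₃^2) (n₂^2) (n₁^2) hsq3 hsq1 h23 h12
        (fun h => ht1 (by obtain ⟨u,v⟩ := h; linarith))) (by linear_combination (1 + n₃^2 + n₃^4 + n₂^2 + (-2)*n₂^2*n₃^2 + n₂^4 + n₁^2 + (-2)*n₁^2*n₃^2 + (-2)*n₁^2*n₂^2 + n₁^4) * hunit)
    · exact lt_of_lt_of_eq (schur_aux (n₂^2) (n₃^2) (n₁^2) hsq2 hsq1 h23 h13
        (fun h => ht1 (by obtain ⟨u,v⟩ := h; linarith))) (by linear_combination (1 + n₃^2 + n₃^4 + n₂^2 + (-2)*n₂^2*n₃^2 + n₂^4 + n₁^2 + (-2)*n₁^2*n₃^2 + (-2)*n₁^2*n₂^2 + n₁^4) * hunit)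
    · exact lt_of_lt_of_eq (schur_aux (n₂^2) (n₁^2) (n₃^2) hsq2 hsq3 h12 h13
        (fun h => ht1 (by obtain ⟨u,v⟩ := h; linarith))) (by linear_combination (1 + n₃^2 + n₃^4 + n₂^2 + (-2)*n₂^2*n₃^2 + n₂^4 + n₁^2 + (-2)*n₁^2*n₃^2 + (-2)*n₁^2*n₂^2 + n₁^4) * hunit)
    · exact lt_of_lt_of_eq (schur_aux (n₃^2) (n₁^2) (n₂^2) hsq3 hsq2 h13 h12
        (fun h => ht1 (by obtain ⟨u,v⟩ := h; linarith))) (by linear_combination (1 + n₃^2 + n₃^4 + n₂^2 + (-2)*n₂^2*n₃^2 + n₂^4 + n₁^2 + (-2)*n₁^2*n₃^2 + (-2)*n₁^2*n₂^2 + n₁^4) * hunit)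
    · exact lt_of_lt_of_eq (schur_aux (n₁^2) (n₃^2) (n₂^2) hsq1 hsq2 h13 h23
        (fun h => ht1 (by obtain ⟨u,v⟩ := h; linarith))) (by linear_combination (1 + n₃^2 + n₃^4 + n₂^2 + (-2)*n₂^2*n₃^2 + n₂^4 + n₁^2 + (-2)*n₁^2*n₃^2 + (-2)*n₁^2*n₂^2 + n₁^4) * hunit)
    · exact lt_of_lt_of_eq (schur_aux (n₁^2) (n₂^2) (n₃^2) hsq1 hsq3 h12 h23
        (fun h => ht1 (by obtain ⟨u,v⟩ := h; linarith))) (by linear_combination (1 + n₃^2 + n₃^4 + n₂^2 + (-2)*n₂^2*n₃^2 + n₂^4 + n₁^2 + (-2)*n₁^2*n₃^2 + (-2)*n₁^2*n₂^2 + n₁^4) * hunit)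
    · exact lt_of_lt_of_eq (schur_aux (n₁^2) (n₂^2) (n₃^2) hsq1 hsq3 h12 h23
        (fun h => ht1 (by obtain ⟨u,v⟩ := h; linarith))) (by linear_combination (1 + n₃^2 + n₃^4 + n₂^2 + (-2)*n₂^2*n₃^2 + n₂^4 + n₁^2 + (-2)*n₁^2*n₃^2 + (-2)*n₁^2*n₂^2 + n₁^4) * hunit)
  have hg2 : (gfun n₁ n₂ n₃)^2 = 1 - 4*(n₁^2*n₂^2 + n₂^2*n₃^2 + n₃^2*n₁^2) + 9*n₁^2*n₂^2*n₃^2 := by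
    simp only [gfun]; exact Real.sq_sqrt hGpos.le
  have hgpos : 0 < gfun n₁ n₂ n₃ := by
    simp only [gfun]; exact Real.sqrt_pos.mpr hGpos
  have hg2m : (-(gfun n₁ n₂ n₃))^2 = 1 - 4*(n₁^2*n₂^2 + n₂^2*n₃^2 + n₃^2*n₁^2) + 9*n₁^2*n₂^2*n₃^2 := by
    rw [show (-(gfun n₁ n₂ n₃))^2 = (gfun n₁ n₂ n₃)^2 from by ring]; exact hg2
  have hXm : n₂^2 - n₃^2 + -(gfun n₁ n₂ n₃) ≠ 0 := fun h => h4 (by linarith)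
  have hYm : n₃^2 - n₁^2 + -(gfun n₁ n₂ n₃) ≠ 0 := fun h => h5 (by linarith)
  have hZm : n₁^2 - n₂^2 + -(gfun n₁ n₂ n₃) ≠ 0 := fun h => h6 (by linarith)
  have hw : (n₁*n₂*n₃*(n₁^2 - 1/3)*(n₂^2 - 1/3)*(n₃^2 - 1/3) : ℝ) ≠ 0 :=
    mul_ne_zero (mul_ne_zero (mul_ne_zero (mul_ne_zero (mul_ne_zero hn1 hn2) hn3)
      (sub_ne_zero.mpr ht1)) (sub_ne_zero.mpr ht2)) (sub_ne_zero.mpr ht3)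
  have hsign : (sfun n₁ n₂ n₃ = 1 ∧ 0 < n₁*n₂*n₃*(n₁^2 - 1/3)*(n₂^2 - 1/3)*(n₃^2 - 1/3)) ∨ (sfun n₁ n₂ n₃ = -1 ∧ n₁*n₂*n₃*(n₁^2 - 1/3)*(n₂^2 - 1/3)*(n₃^2 - 1/3) < 0) := by
    rcases hw.lt_or_gt with h|h
    · exact Or.inr ⟨by simp only [sfun]; exact Real.sign_of_neg h, h⟩
    · exact Or.inl ⟨by simp only [sfun]; exact Real.sign_of_pos h, h⟩
  have hs2 : (sfun n₁ n₂ n₃)^2 = 1 := by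
    rcases hsign with ⟨h,_⟩|⟨h,_⟩ <;> rw [h] <;> norm_num
  have hsw : 0 < sfun n₁ n₂ n₃ * (n₁*n₂*n₃*(n₁^2 - 1/3)*(n₂^2 - 1/3)*(n₃^2 - 1/3)) := by
    rcases hsign with ⟨h,h'⟩|⟨h,h'⟩ <;> rw [h] <;> nlinarith
  have hdnm : dot3 (n₁,n₂,n₃) (uvec n₁ n₂ n₃ (-(gfun n₁ n₂ n₃))) = 0 :=
    n_orth n₁ n₂ n₃ (-(gfun n₁ n₂ n₃)) hunit hg2m hXm hYm hZm
  have hdnp : dot3 (n₁,n₂,n₃) (uvec n₁ n₂ n₃ (gfun n₁ n₂ n₃)) = 0 :=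
    n_orth n₁ n₂ n₃ (gfun n₁ n₂ n₃) hunit hg2 h1 h2 h3
  have hnormm : dot3 (uvec n₁ n₂ n₃ (-(gfun n₁ n₂ n₃))) (uvec n₁ n₂ n₃ (-(gfun n₁ n₂ n₃))) = 1 :=
    uvec_norm n₁ n₂ n₃ (-(gfun n₁ n₂ n₃)) hn1 hXm
  have hnormp : dot3 (uvec n₁ n₂ n₃ (gfun n₁ n₂ n₃)) (uvec n₁ n₂ n₃ (gfun n₁ n₂ n₃)) = 1 :=
    uvec_norm n₁ n₂ n₃ (gfun n₁ n₂ n₃) hn1 h1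
  have horth : dot3 (uvec n₁ n₂ n₃ (-(gfun n₁ n₂ n₃))) (uvec n₁ n₂ n₃ (gfun n₁ n₂ n₃)) = 0 :=
    u_orth n₁ n₂ n₃ (gfun n₁ n₂ n₃) hunit hg2 hXm h1 hYm h2 hZm h3
  have ht2sq : (1/Real.sqrt 2)^2 = (1/2 : ℝ) := by
    rw [div_pow, one_pow, Real.sq_sqrt (by norm_num : (0:ℝ) ≤ 2)]
  have hnn : dot3 ((n₁ : ℝ), n₂, n₃) (n₁, n₂, n₃) = 1 := by
    simp only [dot3]; linear_combination hunit
  have hT0w : 0 < dot3 (n₁,n₂,n₃) (cross3 (uvec n₁ n₂ n₃ (-(gfun n₁ n₂ n₃))) (uvec n₁ n₂ n₃ (gfun n₁ n₂ n₃))) * (n₁*n₂*n₃*(n₁^2 - 1/3)*(n₂^2 - 1/3)*(n₃^2 - 1/3)) :=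
    triple_pos n₁ n₂ n₃ (gfun n₁ n₂ n₃) hunit hg2 hgpos hn1 hn2 hn3 ht1 ht2 ht3 hXm h1 hYm h2 hZm h3
  have hT0sq : (dot3 (n₁,n₂,n₃) (cross3 (uvec n₁ n₂ n₃ (-(gfun n₁ n₂ n₃))) (uvec n₁ n₂ n₃ (gfun n₁ n₂ n₃))))^2 = 1 := by
    rw [gram, hnn, hnormm, hnormp, horth, hdnm, hdnp]
    norm_num
  refine ⟨?_, ?_, ?_, ?_, ?_, ?_⟩
  · have hT : dot3 (n₁,n₂,n₃) (cross3 (v1 n₁ n₂ n₃) (v2 n₁ n₂ n₃))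
        = sfun n₁ n₂ n₃ * dot3 (n₁,n₂,n₃) (cross3 (uvec n₁ n₂ n₃ (-(gfun n₁ n₂ n₃))) (uvec n₁ n₂ n₃ (gfun n₁ n₂ n₃))) := by
      calc dot3 (n₁,n₂,n₃) (cross3 (v1 n₁ n₂ n₃) (v2 n₁ n₂ n₃))
          = (1/Real.sqrt 2)^2*(2*sfun n₁ n₂ n₃)*(dot3 (n₁,n₂,n₃) (cross3 (uminus n₁ n₂ n₃) (uplus n₁ n₂ n₃))) := by
            simp only [v1, v2]; exact triple_v _ _ _ _ _
        _ = _ := by rw [ht2sq]; simp only [uminus, uplus]; ring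
    rw [hT]
    set T0 := dot3 (n₁,n₂,n₃) (cross3 (uvec n₁ n₂ n₃ (-(gfun n₁ n₂ n₃))) (uvec n₁ n₂ n₃ (gfun n₁ n₂ n₃))) with hT0def
    have hst : 0 < (sfun n₁ n₂ n₃ * T0) * (n₁*n₂*n₃*(n₁^2 - 1/3)*(n₂^2 - 1/3)*(n₃^2 - 1/3))^2 := by
      calc (0:ℝ) < (sfun n₁ n₂ n₃ * (n₁*n₂*n₃*(n₁^2 - 1/3)*(n₂^2 - 1/3)*(n₃^2 - 1/3))) * (T0 * (n₁*n₂*n₃*(n₁^2 - 1/3)*(n₂^2 - 1/3)*(n₃^2 - 1/3))) := mul_pos hsw hT0w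
        _ = (sfun n₁ n₂ n₃ * T0) * (n₁*n₂*n₃*(n₁^2 - 1/3)*(n₂^2 - 1/3)*(n₃^2 - 1/3))^2 := by ring
    have hpos : 0 < sfun n₁ n₂ n₃ * T0 := by
      rcases mul_pos_iff.mp hst with ⟨h,_⟩|⟨_,h⟩
      · exact h
      · exact absurd (sqpos hw) (by linarith)
    have hfac : (sfun n₁ n₂ n₃ * T0 - 1)*(sfun n₁ n₂ n₃ * T0 + 1) = 0 := by
      linear_combination T0^2*hs2 + hT0sq
    rcases mul_eq_zero.mp hfac with h|h
    · linarith
    · linarith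
  · calc dot3 ((n₁:ℝ),n₂,n₃) (v1 n₁ n₂ n₃)
        = (1/Real.sqrt 2)*(dot3 (n₁,n₂,n₃) (uminus n₁ n₂ n₃) - sfun n₁ n₂ n₃*(dot3 (n₁,n₂,n₃) (uplus n₁ n₂ n₃))) := by
          simp only [v1]; exact dot3_vsub _ _ _ _ _
      _ = 0 := by simp only [uminus, uplus]; rw [hdnm, hdnp]; ring
  · calc dot3 ((n₁:ℝ),n₂,n₃) (v2 n₁ n₂ n₃)
        = (1/Real.sqrt 2)*(dot3 (n₁,n₂,n₃) (uminus n₁ n₂ n₃) + sfun n₁ n₂ n₃*(dot3 (n₁,n₂,n₃) (uplus n₁ n₂ n₃))) := by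
          simp only [v2]; exact dot3_vadd _ _ _ _ _
      _ = 0 := by simp only [uminus, uplus]; rw [hdnm, hdnp]; ring
  · calc dot3 (v1 n₁ n₂ n₃) (v2 n₁ n₂ n₃)
        = (1/Real.sqrt 2)^2*(dot3 (uminus n₁ n₂ n₃) (uminus n₁ n₂ n₃) - (sfun n₁ n₂ n₃)^2*(dot3 (uplus n₁ n₂ n₃) (uplus n₁ n₂ n₃))) := by
          simp only [v1, v2]; exact dot3_v12 _ _ _ _
      _ = 0 := by simp only [uminus, uplus]; rw [ht2sq, hnormm, hnormp, hs2]; ring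
  · calc dot3 (v1 n₁ n₂ n₃) (v1 n₁ n₂ n₃)
        = (1/Real.sqrt 2)^2*(dot3 (uminus n₁ n₂ n₃) (uminus n₁ n₂ n₃) - 2*sfun n₁ n₂ n₃*(dot3 (uminus n₁ n₂ n₃) (uplus n₁ n₂ n₃)) + (sfun n₁ n₂ n₃)^2*(dot3 (uplus n₁ n₂ n₃) (uplus n₁ n₂ n₃))) := by
          simp only [v1]; exact dot3_v11 _ _ _ _
      _ = 1 := by simp only [uminus, uplus]; rw [ht2sq, hnormm, hnormp, horth, hs2]; ring
  · calc dot3 (v2 n₁ n₂ n₃) (v2 n₁ n₂ n₃)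
        = (1/Real.sqrt 2)^2*(dot3 (uminus n₁ n₂ n₃) (uminus n₁ n₂ n₃) + 2*sfun n₁ n₂ n₃*(dot3 (uminus n₁ n₂ n₃) (uplus n₁ n₂ n₃)) + (sfun n₁ n₂ n₃)^2*(dot3 (uplus n₁ n₂ n₃) (uplus n₁ n₂ n₃))) := by
          simp only [v2]; exact dot3_v22 _ _ _ _
      _ = 1 := by simp only [uminus, uplus]; rw [ht2sq, hnormm, hnormp, horth, hs2]; ring
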